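/- Let k be a field of characteristic 2 and let L be a 3-dimensional Lie algebra over k with basis {e, h, f} satisfying ⁅h,e⁆ = e, ⁅h,f⁆ = f, ⁅e,f⁆ = h. For an element x = a•e + b•h + c•f of L (a, b, c ∈ k), one has x ∈ range((ad x)²) if and only if b = 0. In other words, the nilpotent cone of 𝔰 coincides with the set M = {x ∈ 𝔰 : x ∈ im (ad x)²}. -/

import Mathlib

/-- In the 3-dimensional Lie algebra `𝔰` over a field of characteristic 2
(basis `e = B 0`, `h = B 1`, `f = B 2` with `⁅h,e⁆ = e`, `⁅h,f⁆ = f`, `⁅e,f⁆ = h`),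
an element `x = a•e + b•h + c•f` lies in the range of `(ad x)²` iff `b = 0`. -/
theorem stmt_3 (k : Type*) [Field k] [CharP k 2]
    (L : Type*) [LieRing L] [LieAlgebra k L]
    (B : Module.Basis (Fin 3) k L)
    (hhe : ⁅B 1, B 0⁆ = B 0) (hhf : ⁅B 1, B 2⁆ = B 2) (hef : ⁅B 0, B 2⁆ = B 1)
    (a b c : k) (x : L) (hx : x = a • B 0 + b • B 1 + c • B 2) :
    x ∈ LinearMap.range ((LieAlgebra.ad k L x) ^ 2) ↔ b = 0 := by
  have h2 : (2 : k) = 0 := CharTwo.two_eq_zero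
  have negL : ∀ v : L, -v = v := fun v => by
    rw [← neg_one_smul k v, show (-1 : k) = 1 from CharTwo.neg_eq 1, one_smul]
  have heh : ⁅B 0, B 1⁆ = B 0 := by rw [← lie_skew, hhe, negL]
  have hfh : ⁅B 2, B 1⁆ = B 2 := by rw [← lie_skew, hhf, negL]
  have hfe : ⁅B 2, B 0⁆ = B 1 := by rw [← lie_skew, hef, negL]
  have ade : ⁅x, B 0⁆ = b • B 0 + c • B 1 := by
    rw [hx]; simp only [add_lie, smul_lie, lie_self, heh, hfe, hhe]
    module
  have adh : ⁅x, B 1⁆ = a • B 0 + c • B 2 := by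
    rw [hx]; simp only [add_lie, smul_lie, lie_self, heh, hfh, hhe]
    module
  have adf : ⁅x, B 2⁆ = a • B 1 + b • B 2 := by
    rw [hx]; simp only [add_lie, smul_lie, lie_self, hef, hhf]
    module
  constructor
  · rintro ⟨y, hy⟩
    set u := B.repr y 0 with hu
    set v := B.repr y 1 with hv
    set w := B.repr y 2 with hw
    have hydef : y = u • B 0 + v • B 1 + w • B 2 := by
      have := B.sum_repr y
      rw [Fin.sum_univ_three] at this
      rw [← this]
    have key : ((LieAlgebra.ad k L x) ^ 2) y =
        ((b^2 + a*c)*u + a*b*v + a^2*w) • B 0 +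
        (b*c*u + (a*c + a*c)*v + a*b*w) • B 1 +
        (c^2*u + b*c*v + (a*c + b^2)*w) • B 2 := by
      rw [pow_two, Module.End.mul_apply, LieAlgebra.ad_apply, LieAlgebra.ad_apply, hydef]
      simp only [lie_add, lie_smul, ade, adh, adf, smul_add, smul_smul]
      module
    rw [key, hx] at hy
    have E : ∀ i : Fin 3,
        (((b^2 + a*c)*u + a*b*v + a^2*w) • B.repr (B 0) +
        (b*c*u + (a*c + a*c)*v + a*b*w) • B.repr (B 1) +
        (c^2*u + b*c*v + (a*c + b^2)*w) • B.repr (B 2)) i =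
        (a • B.repr (B 0) + b • B.repr (B 1) + c • B.repr (B 2)) i := by
      intro i
      have := congrArg (B.repr) hy
      simp only [map_add, map_smul] at this
      rw [this]
    have E0 := E 0
    have E1 := E 1
    have E2 := E 2
    simp only [Module.Basis.repr_self, Finsupp.coe_add, Finsupp.coe_smul, Pi.add_apply,
      Pi.smul_apply, Finsupp.single_apply, smul_eq_mul] at E0 E1 E2
    norm_num [Fin.ext_iff] at E0 E1 E2
    have hb2 : b ^ 2 = 0 := by
      linear_combination b * E1 - c * E0 - a * E2 +
        (b^2 - a*c + a*c^2*u + a^2*c*w) * h2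
    exact pow_eq_zero_iff (n := 2) (by norm_num) |>.mp hb2
  · intro hb
    subst hb
    by_cases ha : a = 0
    · by_cases hc : c = 0
      · refine ⟨0, ?_⟩
        simp [hx, ha, hc]
      · refine ⟨c⁻¹ • B 0, ?_⟩
        rw [pow_two, Module.End.mul_apply, LieAlgebra.ad_apply, LieAlgebra.ad_apply]
        simp only [lie_smul, lie_add, ade, adh, adf, smul_add, smul_smul]
        rw [hx]
        match_scalars <;> field_simp <;> ring
    · refine ⟨a⁻¹ • B 2, ?_⟩
      rw [pow_two, Module.End.mul_apply, LieAlgebra.ad_apply, LieAlgebra.ad_apply]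
      simp only [lie_smul, lie_add, ade, adh, adf, smul_add, smul_smul]
      rw [hx]
      match_scalars <;> field_simp <;> ring
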